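/- Let A = {F₁, F₂, …} be a countable set of label decoders, τ an admissible pairing (surjective onto ℕ² with every fiber infinite), and ≺ a linear order on graphs. Define the diagonalization class C_A to contain, for each n in the domain of τ, the ≺-smallest graph on n vertices not in gr(S_{τ(n)}) (if one exists), where S_{(y,z)} = (F_y, z). Then C_A is not represented by any labeling scheme (F_y, z) with F_y ∈ A and z ∈ ℕ; that is, C_A ∉ G A. -/

import Mathlib

/-- A label decoder is a binary relation on bit strings. -/
def LabelDecoder := List Bool → List Bool → Prop

/-- `G ∈ gr(S)` for the labeling scheme `S = (F, c)`. -/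
def InGr (F : LabelDecoder) (c n : ℕ) (G : SimpleGraph (Fin n)) : Prop :=
  ∃ ℓ : Fin n → List Bool,
    (∀ v, (ℓ v).length = c * Nat.clog 2 n) ∧
    ∀ u v, G.Adj u v ↔ F (ℓ u) (ℓ v)

/-- An (unlabeled) graph: a number of vertices together with a graph on them. -/
def UGraph := (n : ℕ) × SimpleGraph (Fin n)

/-- Many graphs: there are at least `2 ^ (n.choose 2)` graphs on `Fin n`. -/
lemma card_simpleGraph_ge (n : ℕ) :
    2 ^ (n.choose 2) ≤ Fintype.card (SimpleGraph (Fin n)) := by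
  classical
  have key : Function.Injective
      (fun (f : {e : Sym2 (Fin n) // ¬ e.IsDiag} → Bool) =>
        SimpleGraph.fromEdgeSet {e | ∃ h : ¬ e.IsDiag, f ⟨e, h⟩ = true}) := by
    intro f g hfg
    funext e
    obtain ⟨e, he⟩ := e
    induction e with
    | _ u v =>
      have huv : u ≠ v := by
        simpa [Sym2.isDiag_iff_proj_eq] using he
      have h1 := congrArg (fun G : SimpleGraph (Fin n) => G.Adj u v) hfg
      simp only [SimpleGraph.fromEdgeSet_adj, Set.mem_setOf_eq] at h1
      rw [eq_iff_iff] at h1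
      by_cases hf : f ⟨s(u, v), he⟩ = true
      · obtain ⟨⟨h', hg⟩, -⟩ := h1.mp ⟨⟨he, hf⟩, huv⟩
        exact hf.trans hg.symm
      · have hg : ¬ g ⟨s(u, v), he⟩ = true := by
          intro hg
          obtain ⟨⟨h', hf'⟩, -⟩ := h1.mpr ⟨⟨he, hg⟩, huv⟩
          exact hf hf'
        simp only [Bool.not_eq_true] at hf hg
        rw [hf, hg]
  have := Fintype.card_le_of_injective _ key
  calc 2 ^ (n.choose 2)
      = Fintype.card ({e : Sym2 (Fin n) // ¬ e.IsDiag} → Bool) := by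
        rw [Fintype.card_fun, Fintype.card_bool, Sym2.card_subtype_not_diag,
          Fintype.card_fin]
    _ ≤ _ := this

/-- Counting: if `c * clog 2 n * n < n.choose 2` then some graph on `n` vertices
is not in `gr(F, c)`. -/
lemma exists_not_inGr (F : LabelDecoder) (c n : ℕ)
    (h : c * Nat.clog 2 n * n < n.choose 2) :
    ∃ G : SimpleGraph (Fin n), ¬ InGr F c n G := by
  classical
  by_contra h'
  push_neg at h'
  choose ℓ hlen hadj using h'
  set L := c * Nat.clog 2 n with hL
  let f : SimpleGraph (Fin n) → (Fin n → List.Vector Bool L) :=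
    fun G v => ⟨ℓ G v, hlen G v⟩
  have hinj : Function.Injective f := by
    intro G G' hGG'
    ext u v
    rw [hadj G u v, hadj G' u v]
    have hu : ℓ G u = ℓ G' u := congrArg Subtype.val (congrFun hGG' u)
    have hv : ℓ G v = ℓ G' v := congrArg Subtype.val (congrFun hGG' v)
    rw [hu, hv]
  have hcard := Fintype.card_le_of_injective f hinj
  rw [Fintype.card_fun, card_vector, Fintype.card_bool, Fintype.card_fin,
    ← pow_mul] at hcard
  have h2 := le_trans (card_simpleGraph_ge n) hcard
  have h3 : n.choose 2 ≤ L * n := (Nat.pow_le_pow_iff_right (by norm_num)).mp h2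
  omega

/-- Arithmetic: for `n > 2 ^ (2 * (2 * c + 2))`, `c * clog 2 n * n < n.choose 2`. -/
lemma arith_bound (c n : ℕ) (hn : 2 ^ (2 * (2 * c + 2)) < n) :
    c * Nat.clog 2 n * n < n.choose 2 := by
  set s := 2 * c + 2 with hs
  set K := 2 * s with hK
  set m := Nat.clog 2 n with hm
  have h1n : 1 < n := lt_of_le_of_lt (Nat.one_le_two_pow) hn
  have hKm : K < m := by
    by_contra hc
    push_neg at hc
    have : n ≤ 2 ^ K := (Nat.clog_le_iff_le_pow (by norm_num)).mp hc
    omega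
  have hpow : 2 ^ (m - 1) < n := Nat.pow_pred_clog_lt_self (by norm_num) h1n
  -- show 2 * c * m < 2 ^ (m - 1)
  have hsplit : 2 ^ (m - 1) = 2 ^ s * 2 ^ (m - 1 - s) := by
    rw [← pow_add]
    congr 1
    omega
  have h2s : 4 * c + 4 ≤ 2 ^ s := by
    have : 2 * c < 2 ^ (2 * c) := Nat.lt_two_pow_self (n := 2 * c)
    calc 4 * c + 4 ≤ 4 * (2 * c + 1) := by omega
      _ ≤ 4 * 2 ^ (2 * c) := by
          have : 2 * c + 1 ≤ 2 ^ (2 * c) := this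
          omega
      _ = 2 ^ s := by rw [hs, pow_add]; ring
  have h2rest : m - s ≤ 2 ^ (m - 1 - s) := by
    have := Nat.lt_two_pow_self (n := m - 1 - s)
    omega
  have hkey : 2 * c * m < 2 ^ (m - 1) := by
    have h1 : (4 * c + 4) * (m - s) ≤ 2 ^ (m - 1) := by
      rw [hsplit]
      exact Nat.mul_le_mul h2s h2rest
    have h2 : 2 * c * m < (4 * c + 4) * (m - s) := by
      have hm2s : 2 * s ≤ m := le_of_lt hKm
      nlinarith [hm2s, Nat.sub_add_cancel (le_trans (by omega : s ≤ 2 * s) hm2s)]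
    omega
  -- hence 2 * c * m < n - 1, so c * m * n < n.choose 2
  have hmain : 2 * c * m < n - 1 := by omega
  have hch : n.choose 2 * 2 = n * (n - 1) := by
    rw [Nat.choose_two_right]
    rw [Nat.div_mul_cancel]
    rcases Nat.even_or_odd n with he | ho
    · exact Dvd.dvd.mul_right he.two_dvd _
    · exact Dvd.dvd.mul_left (Nat.Odd.sub_odd ho odd_one).two_dvd _
  have : c * m * n * 2 < n.choose 2 * 2 := by
    rw [hch]
    calc c * m * n * 2 = (2 * c * m) * n := by ring
      _ < (n - 1) * n := by
          exact Nat.mul_lt_mul_of_lt_of_le hmain (le_refl n) (by omega)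
      _ = n * (n - 1) := by ring
  omega

/-- Diagonalization: let `A = {F₀, F₁, …}` be a countable family of label decoders,
`τ` an admissible pairing (partial, with every fiber over `ℕ²` infinite) and `≺` a family
of linear orders on graphs.  The diagonalization class `C`, containing for each
`n ∈ dom τ` with `τ(n) = (y, z)` the `≺`-smallest graph on `n` vertices not in
`gr(F_y, z)` (if one exists), is not represented by any labeling scheme `(F_y, z)` with
`y, z ∈ ℕ`, i.e. `C ∉ G A`. -/
theorem stmt_4 (F : ℕ → LabelDecoder) (τ : ℕ → Option (ℕ × ℕ))
    (hτ : ∀ p : ℕ × ℕ, {x : ℕ | τ x = some p}.Infinite)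
    (prec : ∀ n : ℕ, LinearOrder (SimpleGraph (Fin n)))
    (C : Set UGraph)
    (hC : ∀ p : UGraph, p ∈ C ↔
      ∃ y z : ℕ, τ p.1 = some (y, z) ∧ ¬ InGr (F y) z p.1 p.2 ∧
        ∀ H : SimpleGraph (Fin p.1), ¬ InGr (F y) z p.1 H → ¬ (prec p.1).lt H p.2) :
    ¬ ∃ y z : ℕ, ∀ p ∈ C, InGr (F y) z p.1 p.2 := by
  classical
  rintro ⟨y, z, hyz⟩
  obtain ⟨n, hn, hngt⟩ := (hτ (y, z)).exists_gt (2 ^ (2 * (2 * z + 2)))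
  have hbound := arith_bound z n hngt
  obtain ⟨G, hG⟩ := exists_not_inGr (F y) z n hbound
  set S : Set (SimpleGraph (Fin n)) := {H | ¬ InGr (F y) z n H} with hS
  obtain ⟨G₀, hG₀S, hmin⟩ : ∃ G₀ ∈ S, ∀ H ∈ S, @LE.le _ (prec n).toLE H G₀ → G₀ = H := by
    obtain ⟨G₀, hG₀S, hm⟩ := @Set.Finite.exists_minimalFor _ _ (prec n).toLE
      ⟨fun a b c h1 h2 => @le_trans _ (prec n).toPreorder c b a h2 h1⟩ id S (Set.toFinite S) ⟨G, hG⟩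
    exact ⟨G₀, hG₀S, fun H hH hle => @le_antisymm _ (prec n).toPartialOrder _ _ (hm hH hle) hle⟩
  have hmem : (⟨n, G₀⟩ : UGraph) ∈ C := by
    refine (hC ⟨n, G₀⟩).mpr ?_
    refine ⟨y, z, hn, hG₀S, ?_⟩
    intro H hH hlt
    obtain ⟨hle, hnle⟩ := ((prec n).lt_iff_le_not_ge H G₀).mp hlt
    have heq : G₀ = H := hmin H hH hle
    subst heq
    exact hnle hle
  exact hG₀S (hyz ⟨n, G₀⟩ hmem)
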